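/- There exist ε₀ > 0 and C ≥ 0, depending only on h, such that for every ε with |ε| ≤ ε₀ and every 1-periodic, nonnegative, continuous φ : ℝ → ℝ with ∫₀¹ φ = 1: the map g := g_{ε,φ} is a strictly increasing bijection of ℝ, and for all x, y ∈ ℝ, g'(g^{-1}(y)) / g'(g^{-1}(x)) ≤ e^{C|ε|·|x−y|}. -/

import Mathlib

open MeasureTheory

/-- The coupled map `g_{ε,φ}(x) = x + ε ∫₀¹ h(x,y) φ(y) dy`. -/
noncomputable def gmap (h : ℝ → ℝ → ℝ) (ε : ℝ) (φ : ℝ → ℝ) : ℝ → ℝ :=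
  fun x => x + ε * ∫ y in (0:ℝ)..1, h x y * φ y

/-- The transfer operator of `g_{ε,φ}` applied to `u`: `(u / g') ∘ g⁻¹`. -/
noncomputable def Lop (h : ℝ → ℝ → ℝ) (ε : ℝ) (φ u : ℝ → ℝ) : ℝ → ℝ :=
  fun x => u (Function.invFun (gmap h ε φ) x) /
    deriv (gmap h ε φ) (Function.invFun (gmap h ε φ) x)

/-- The transfer operator of the doubling map. -/
noncomputable def Pop (ψ : ℝ → ℝ) : ℝ → ℝ :=
  fun x => (1/2) * ψ (x/2) + (1/2) * ψ ((x+1)/2)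

/-- The self-consistent transfer operator `T_ε φ = P (L_{ε,φ} φ)`. -/
noncomputable def Tsc (h : ℝ → ℝ → ℝ) (ε : ℝ) (φ : ℝ → ℝ) : ℝ → ℝ :=
  Pop (Lop h ε φ φ)

/-- `h` is 1-periodic in each variable. -/
def periodicH (h : ℝ → ℝ → ℝ) : Prop :=
  (∀ x y, h (x+1) y = h x y) ∧ (∀ x y, h x (y+1) = h x y)

/-- `B_L`: 1-periodic, nonnegative, `L`-Lipschitz densities with `∫₀¹ φ = 1`. -/
def memB (L : ℝ) (φ : ℝ → ℝ) : Prop :=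
  (∀ x, φ (x+1) = φ x) ∧ (∀ x, 0 ≤ φ x) ∧
  (∀ x y, |φ x - φ y| ≤ L * |x - y|) ∧ (∫ x in (0:ℝ)..1, φ x) = 1

lemma aux_periodic_bound {E : Type*} [NormedAddCommGroup E]
    (F : ℝ → ℝ → E) (hF : Continuous (Function.uncurry F))
    (h1 : ∀ x y, F (x+1) y = F x y) (h2 : ∀ x y, F x (y+1) = F x y) :
    ∃ M : ℝ, 0 ≤ M ∧ ∀ x y, ‖F x y‖ ≤ M := by
  obtain ⟨M, hM⟩ := (isCompact_Icc (a := ((0:ℝ),(0:ℝ))) (b := (1,1))).exists_bound_of_continuousOn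
    hF.continuousOn
  refine ⟨max M 0, le_max_right _ _, fun x y => ?_⟩
  have e1 : F (Int.fract x) (Int.fract y) = F x (Int.fract y) := by
    have p1 : Function.Periodic (fun t => F t (Int.fract y)) 1 := fun t => h1 t _
    have := p1.sub_int_mul_eq (x := x) ⌊x⌋
    rw [mul_one] at this; exact this
  have e2 : F x (Int.fract y) = F x y := by
    have p2 : Function.Periodic (fun t => F x t) 1 := fun t => h2 x t
    have := p2.sub_int_mul_eq (x := y) ⌊y⌋
    rw [mul_one] at this; exact this
  have hmem : ((Int.fract x, Int.fract y) : ℝ × ℝ) ∈ Set.Icc ((0:ℝ),(0:ℝ)) (1,1) := by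
    refine ⟨⟨Int.fract_nonneg x, Int.fract_nonneg y⟩,
      ⟨(Int.fract_lt_one x).le, (Int.fract_lt_one y).le⟩⟩
  calc ‖F x y‖ = ‖Function.uncurry F (Int.fract x, Int.fract y)‖ := by
        simp only [Function.uncurry, e1, e2]
      _ ≤ M := hM _ hmem
      _ ≤ max M 0 := le_max_left _ _

lemma aux_fderiv_shift {E F' : Type*} [NormedAddCommGroup E] [NormedSpace ℝ E]
    [NormedAddCommGroup F'] [NormedSpace ℝ F']
    (f : E → F') (hf : Differentiable ℝ f) (v : E) (hper : ∀ p, f (p + v) = f p) (p : E) :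
    fderiv ℝ f (p + v) = fderiv ℝ f p := by
  have h1 : HasFDerivAt (fun q => f (q + v))
      ((fderiv ℝ f (p + v)).comp (ContinuousLinearMap.id ℝ E)) p :=
    (hf (p + v)).hasFDerivAt.comp p ((hasFDerivAt_id p).add_const v)
  have h2 : (fun q => f (q + v)) = f := funext hper
  rw [h2, ContinuousLinearMap.comp_id] at h1
  exact h1.fderiv.symm


/-- Distortion estimate for the coupled map: `g'(g⁻¹(y)) / g'(g⁻¹(x)) ≤ e^{C|ε||x−y|}`. -/
theorem stmt9 (h : ℝ → ℝ → ℝ) (hC2 : ContDiff ℝ 2 (Function.uncurry h))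
    (hper : periodicH h) :
    ∃ ε₀ > (0:ℝ), ∃ C ≥ (0:ℝ), ∀ ε : ℝ, |ε| ≤ ε₀ →
      ∀ φ : ℝ → ℝ, (∀ x, φ (x+1) = φ x) → (∀ x, 0 ≤ φ x) → Continuous φ →
        (∫ x in (0:ℝ)..1, φ x) = 1 →
        StrictMono (gmap h ε φ) ∧ Function.Bijective (gmap h ε φ) ∧
        ∀ x y : ℝ,
          deriv (gmap h ε φ) (Function.invFun (gmap h ε φ) y) /
            deriv (gmap h ε φ) (Function.invFun (gmap h ε φ) x)
          ≤ Real.exp (C * |ε| * |x - y|) := by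
  classical
  set H : ℝ × ℝ → ℝ := Function.uncurry h with hH
  have hHc : Continuous H := hC2.continuous
  have hHd : Differentiable ℝ H := hC2.differentiable (by norm_num)
  set ψ : ℝ × ℝ → ℝ := fun p => fderiv ℝ H p (1, 0) with hψdef
  have hψc1 : ContDiff ℝ 1 ψ := by
    have h1 : ContDiff ℝ 1 (fderiv ℝ H) := hC2.fderiv_right (by norm_num)
    exact (ContinuousLinearMap.apply ℝ ℝ ((1:ℝ),(0:ℝ))).contDiff.comp h1
  -- partial derivative in x
  have hd : ∀ x y : ℝ, HasDerivAt (fun t => h t y) (ψ (x, y)) x := by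
    intro x y
    have h1 : HasFDerivAt H (fderiv ℝ H (x, y)) (x, y) := (hHd _).hasFDerivAt
    have h2 : HasDerivAt (fun t : ℝ => ((t, y) : ℝ × ℝ)) ((1:ℝ), (0:ℝ)) x :=
      (hasDerivAt_id x).prodMk (hasDerivAt_const x y)
    exact h1.comp_hasDerivAt x h2
  -- periodicity of H
  have hHper1 : ∀ p : ℝ × ℝ, H (p + (1, 0)) = H p := by
    intro p; show h (p.1 + 1) (p.2 + 0) = h p.1 p.2
    rw [add_zero, hper.1]
  have hHper2 : ∀ p : ℝ × ℝ, H (p + (0, 1)) = H p := by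
    intro p; show h (p.1 + 0) (p.2 + 1) = h p.1 p.2
    rw [add_zero, hper.2]
  -- periodicity of ψ
  have hψper1 : ∀ x y : ℝ, ψ (x + 1, y) = ψ (x, y) := by
    intro x y
    have hs := aux_fderiv_shift H hHd (1, 0) hHper1 (x, y)
    show fderiv ℝ H (x + 1, y) (1, 0) = fderiv ℝ H (x, y) (1, 0)
    have e : ((x, y) : ℝ × ℝ) + (1, 0) = (x + 1, y) := by simp
    rw [← e, hs]
  have hψper2 : ∀ x y : ℝ, ψ (x, y + 1) = ψ (x, y) := by
    intro x y
    have hs := aux_fderiv_shift H hHd (0, 1) hHper2 (x, y)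
    show fderiv ℝ H (x, y + 1) (1, 0) = fderiv ℝ H (x, y) (1, 0)
    have e : ((x, y) : ℝ × ℝ) + (0, 1) = (x, y + 1) := by simp
    rw [← e, hs]
  -- bound on ψ
  have hψcont : Continuous ψ := hψc1.continuous
  obtain ⟨M₁, hM₁0, hM₁⟩ : ∃ M : ℝ, 0 ≤ M ∧ ∀ x y : ℝ, ‖ψ (x, y)‖ ≤ M := by
    refine aux_periodic_bound (fun x y => ψ (x, y)) ?_ hψper1 hψper2
    exact hψcont
  -- bound on fderiv ψ
  have hψd : Differentiable ℝ ψ := hψc1.differentiable (by norm_num)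
  have hψper1' : ∀ p : ℝ × ℝ, ψ (p + (1, 0)) = ψ p := by
    intro p
    have e : (p : ℝ × ℝ) + (1, 0) = (p.1 + 1, p.2) := by simp [Prod.ext_iff]
    rw [e, hψper1]
  have hψper2' : ∀ p : ℝ × ℝ, ψ (p + (0, 1)) = ψ p := by
    intro p
    have e : (p : ℝ × ℝ) + (0, 1) = (p.1, p.2 + 1) := by simp [Prod.ext_iff]
    rw [e, hψper2]
  obtain ⟨M₂, hM₂0, hM₂⟩ : ∃ M : ℝ, 0 ≤ M ∧ ∀ x y : ℝ, ‖fderiv ℝ ψ (x, y)‖ ≤ M := by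
    refine aux_periodic_bound (fun x y => fderiv ℝ ψ (x, y)) ?_ ?_ ?_
    · exact hψc1.continuous_fderiv (by norm_num)
    · intro x y
      have hs := aux_fderiv_shift ψ hψd (1, 0) hψper1' (x, y)
      have e : ((x, y) : ℝ × ℝ) + (1, 0) = (x + 1, y) := by simp
      show fderiv ℝ ψ (x + 1, y) = fderiv ℝ ψ (x, y)
      rw [← e, hs]
    · intro x y
      have hs := aux_fderiv_shift ψ hψd (0, 1) hψper2' (x, y)
      have e : ((x, y) : ℝ × ℝ) + (0, 1) = (x, y + 1) := by simp
      show fderiv ℝ ψ (x, y + 1) = fderiv ℝ ψ (x, y)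
      rw [← e, hs]
  -- Lipschitz property of ψ in the first variable
  have hψlip : ∀ a b y : ℝ, |ψ (a, y) - ψ (b, y)| ≤ M₂ * |a - b| := by
    intro a b y
    have key := Convex.norm_image_sub_le_of_norm_fderiv_le (f := ψ) (C := M₂)
      (fun p _ => hψd p) (fun p _ => by simpa using hM₂ p.1 p.2)
      convex_univ (Set.mem_univ ((b, y) : ℝ × ℝ)) (Set.mem_univ ((a, y) : ℝ × ℝ))
    have e : ‖((a, y) : ℝ × ℝ) - (b, y)‖ = |a - b| := by
      rw [Prod.norm_def]
      simp [Real.norm_eq_abs]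
    rw [Real.norm_eq_abs, e] at key
    exact key
  -- constants
  refine ⟨(2 * (M₁ + 1))⁻¹, by positivity, 4 * M₂, by positivity, ?_⟩
  intro ε hε φ hφper hφ0 hφc hφint
  -- derivative of the integral
  set G : ℝ → ℝ := fun x => ∫ y in (0:ℝ)..1, h x y * φ y with hGdef
  set G' : ℝ → ℝ := fun x => ∫ y in (0:ℝ)..1, ψ (x, y) * φ y with hG'def
  have hcont1 : ∀ x : ℝ, Continuous (fun t => h x t) := by
    intro x
    exact hHc.comp (Continuous.prodMk_right x)
  have hcont2 : ∀ x : ℝ, Continuous (fun t => ψ (x, t)) := by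
    intro x
    exact hψcont.comp (Continuous.prodMk_right x)
  have hG : ∀ x₀ : ℝ, HasDerivAt G (G' x₀) x₀ := by
    intro x₀
    have := intervalIntegral.hasDerivAt_integral_of_dominated_loc_of_deriv_le
      (F := fun x t => h x t * φ t) (F' := fun x t => ψ (x, t) * φ t)
      (x₀ := x₀) (a := (0:ℝ)) (b := 1) (μ := volume)
      (bound := fun t => M₁ * φ t) (s := Set.univ) Filter.univ_mem
      (Filter.Eventually.of_forall fun x =>
        (((hcont1 x).mul hφc)).aestronglyMeasurable)
      (((hcont1 x₀).mul hφc).intervalIntegrable 0 1)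
      (((hcont2 x₀).mul hφc).aestronglyMeasurable)
      (Filter.Eventually.of_forall fun t _ x _ => ?_)
      ((continuous_const.mul hφc).intervalIntegrable 0 1)
      (Filter.Eventually.of_forall fun t _ x _ => (hd x t).mul_const (φ t))
    · exact this.2
    · rw [Real.norm_eq_abs, abs_mul, abs_of_nonneg (hφ0 t)]
      exact mul_le_mul_of_nonneg_right (hM₁ x t) (hφ0 t)
  -- bounds on G'
  have hG'bd : ∀ x : ℝ, |G' x| ≤ M₁ := by
    intro x
    have hint1 : IntervalIntegrable (fun y => |ψ (x, y) * φ y|) volume 0 1 :=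
      (((hcont2 x).mul hφc).abs).intervalIntegrable 0 1
    have hint2 : IntervalIntegrable (fun y => M₁ * φ y) volume 0 1 :=
      (continuous_const.mul hφc).intervalIntegrable 0 1
    calc |G' x| ≤ ∫ y in (0:ℝ)..1, |ψ (x, y) * φ y| :=
          intervalIntegral.abs_integral_le_integral_abs zero_le_one
      _ ≤ ∫ y in (0:ℝ)..1, M₁ * φ y := by
          apply intervalIntegral.integral_mono_on zero_le_one hint1 hint2
          intro y _
          rw [abs_mul, abs_of_nonneg (hφ0 y)]
          exact mul_le_mul_of_nonneg_right (hM₁ x y) (hφ0 y)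
      _ = M₁ := by rw [intervalIntegral.integral_const_mul, hφint, mul_one]
  have hG'lip : ∀ a b : ℝ, |G' a - G' b| ≤ M₂ * |a - b| := by
    intro a b
    have hia : IntervalIntegrable (fun y => ψ (a, y) * φ y) volume 0 1 :=
      ((hcont2 a).mul hφc).intervalIntegrable 0 1
    have hib : IntervalIntegrable (fun y => ψ (b, y) * φ y) volume 0 1 :=
      ((hcont2 b).mul hφc).intervalIntegrable 0 1
    have e : G' a - G' b = ∫ y in (0:ℝ)..1, (ψ (a, y) - ψ (b, y)) * φ y := by
      rw [hG'def]
      rw [← intervalIntegral.integral_sub hia hib]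
      congr 1; funext y; ring
    rw [e]
    have hint1 : IntervalIntegrable (fun y => |(ψ (a, y) - ψ (b, y)) * φ y|) volume 0 1 :=
      ((((hcont2 a).sub (hcont2 b)).mul hφc).abs).intervalIntegrable 0 1
    have hint2 : IntervalIntegrable (fun y => (M₂ * |a - b|) * φ y) volume 0 1 :=
      (continuous_const.mul hφc).intervalIntegrable 0 1
    calc |∫ y in (0:ℝ)..1, (ψ (a, y) - ψ (b, y)) * φ y|
        ≤ ∫ y in (0:ℝ)..1, |(ψ (a, y) - ψ (b, y)) * φ y| :=
          intervalIntegral.abs_integral_le_integral_abs zero_le_one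
      _ ≤ ∫ y in (0:ℝ)..1, (M₂ * |a - b|) * φ y := by
          apply intervalIntegral.integral_mono_on zero_le_one hint1 hint2
          intro y _
          rw [abs_mul, abs_of_nonneg (hφ0 y)]
          exact mul_le_mul_of_nonneg_right (hψlip a b y) (hφ0 y)
      _ = M₂ * |a - b| := by rw [intervalIntegral.integral_const_mul, hφint, mul_one]
  -- derivative of g
  set g : ℝ → ℝ := gmap h ε φ with hgdef
  have hg' : ∀ x : ℝ, HasDerivAt g (1 + ε * G' x) x := by
    intro x
    have : HasDerivAt (fun x => x + ε * G x) (1 + ε * G' x) x :=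
      (hasDerivAt_id x).add ((hG x).const_mul ε)
    exact this
  have hεsmall : |ε| * M₁ ≤ 1 / 2 := by
    have h1 : |ε| * M₁ ≤ (2 * (M₁ + 1))⁻¹ * M₁ :=
      mul_le_mul_of_nonneg_right hε hM₁0
    have h2 : (2 * (M₁ + 1))⁻¹ * M₁ ≤ 1 / 2 := by
      rw [inv_mul_le_iff₀ (by positivity)]
      nlinarith
    linarith
  have hdlb : ∀ x : ℝ, (1:ℝ)/2 ≤ 1 + ε * G' x := by
    intro x
    have : |ε * G' x| ≤ 1/2 := by
      rw [abs_mul]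
      calc |ε| * |G' x| ≤ |ε| * M₁ := mul_le_mul_of_nonneg_left (hG'bd x) (abs_nonneg ε)
        _ ≤ 1/2 := hεsmall
    have := (abs_le.mp this).1
    linarith
  have hderiv_eq : ∀ x : ℝ, deriv g x = 1 + ε * G' x := fun x => (hg' x).deriv
  -- strict monotonicity
  have hmono : StrictMono g := by
    apply strictMono_of_deriv_pos
    intro x
    rw [hderiv_eq x]
    linarith [hdlb x]
  -- the function g x - x/2 is monotone
  have hm : Monotone (fun x => g x - x / 2) := by
    apply monotone_of_deriv_nonneg
    · intro x
      exact ((hg' x).sub ((hasDerivAt_id x).div_const 2)).differentiableAt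
    · intro x
      have : HasDerivAt (fun x => g x - x / 2) (1 + ε * G' x - 1 / 2) x :=
        (hg' x).sub ((hasDerivAt_id x).div_const 2)
      rw [this.deriv]
      linarith [hdlb x]
  have hgcont : Continuous g := by
    have : Differentiable ℝ g := fun x => (hg' x).differentiableAt
    exact this.continuous
  -- surjectivity
  have hsurj : Function.Surjective g := by
    intro z
    set b := max 0 (2 * (z - g 0)) with hb
    set a := min 0 (2 * (z - g 0)) with ha
    have hab : a ≤ b := le_trans (min_le_left _ _) (le_max_left _ _)
    have hgb : z ≤ g b := by
      have h1 := hm (le_max_left 0 (2 * (z - g 0)))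
      simp only at h1
      have h2 : 2 * (z - g 0) ≤ b := le_max_right _ _
      -- g 0 - 0 ≤ g b - b/2, so g b ≥ g 0 + b/2 ≥ g 0 + (z - g 0) = z
      have : g 0 - 0 / 2 ≤ g b - b / 2 := h1
      linarith
    have hga : g a ≤ z := by
      have h1 := hm (min_le_left 0 (2 * (z - g 0)))
      have h2 : a ≤ 2 * (z - g 0) := min_le_right _ _
      have : g a - a / 2 ≤ g 0 - 0 / 2 := h1
      linarith
    have := intermediate_value_Icc hab hgcont.continuousOn
    obtain ⟨x, _, hx⟩ := this ⟨hga, hgb⟩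
    exact ⟨x, hx⟩
  refine ⟨hmono, ⟨hmono.injective, hsurj⟩, ?_⟩
  -- distortion estimate
  intro x y
  set a := Function.invFun g y with hadef
  set b := Function.invFun g x with hbdef
  have hga : g a = y := Function.invFun_eq (hsurj y)
  have hgb : g b = x := Function.invFun_eq (hsurj x)
  -- |a - b| ≤ 2 |x - y|
  have key : ∀ u v : ℝ, |u - v| ≤ 2 * |g u - g v| := by
    intro u v
    rcases le_total u v with h' | h'
    · have h1 : g u - u / 2 ≤ g v - v / 2 := hm h'
      have h2 : g u ≤ g v := hmono.le_iff_le.mpr h'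
      rw [abs_of_nonpos (by linarith), abs_of_nonpos (by linarith)]
      linarith
    · have h1 : g v - v / 2 ≤ g u - u / 2 := hm h'
      have h2 : g v ≤ g u := hmono.le_iff_le.mpr h'
      rw [abs_of_nonneg (by linarith), abs_of_nonneg (by linarith)]
      linarith
  have hab2 : |a - b| ≤ 2 * |x - y| := by
    have := key a b
    rw [hga, hgb] at this
    rw [abs_sub_comm x y]
    exact this
  -- final estimate
  rw [hderiv_eq a, hderiv_eq b]
  have hdb : (1:ℝ)/2 ≤ 1 + ε * G' b := hdlb b
  have hda : 1 + ε * G' a ≤ (1 + ε * G' b) + |ε| * (M₂ * |a - b|) := by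
    have h2 : |ε * (G' a - G' b)| ≤ |ε| * (M₂ * |a - b|) := by
      rw [abs_mul]
      exact mul_le_mul_of_nonneg_left (hG'lip a b) (abs_nonneg ε)
    have h3 := (abs_le.mp h2).2
    have h4 : ε * (G' a - G' b) = ε * G' a - ε * G' b := by ring
    linarith [h4 ▸ h3]
  have hratio : (1 + ε * G' a) / (1 + ε * G' b) ≤ 1 + 4 * M₂ * |ε| * |x - y| := by
    rw [div_le_iff₀ (by linarith : (0:ℝ) < 1 + ε * G' b)]
    have e1 : |ε| * (M₂ * |a - b|) ≤ |ε| * (M₂ * (2 * |x - y|)) := by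
      apply mul_le_mul_of_nonneg_left _ (abs_nonneg ε)
      exact mul_le_mul_of_nonneg_left hab2 hM₂0
    have e2 : 4 * M₂ * |ε| * |x - y| * (1/2) ≤ 4 * M₂ * |ε| * |x - y| * (1 + ε * G' b) := by
      apply mul_le_mul_of_nonneg_left hdb (by positivity)
    nlinarith
  calc (1 + ε * G' a) / (1 + ε * G' b) ≤ 1 + 4 * M₂ * |ε| * |x - y| := hratio
    _ ≤ Real.exp (4 * M₂ * |ε| * |x - y|) := by
        have := Real.add_one_le_exp (4 * M₂ * |ε| * |x - y|)
        linarith
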